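/- Let Y ∈ ℝ^{I×I×2} have slices Y₁, Y₂ such that det(μY₁ + λY₂) = 0 for all real μ, λ. Then Y admits a full Generalized Schur Decomposition: there exist orthogonal I×I matrices Q_a, Q_b and upper triangular I×I matrices R₁, R₂ such that Y_k = Q_a R_k Q_bᵀ for k = 1, 2. -/

import Mathlib

open Matrix Polynomial
noncomputable section



lemma dot_self_pos {n : ℕ} {w : Fin n → ℝ} (hw : w ≠ 0) : 0 < w ⬝ᵥ w := by
  rcases Function.ne_iff.mp hw with ⟨i, hi⟩
  calc (0:ℝ) < w i * w i := mul_self_pos.mpr hi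
    _ ≤ w ⬝ᵥ w :=
      Finset.single_le_sum (f := fun j => w j * w j)
        (fun j _ => mul_self_nonneg _) (Finset.mem_univ i)

lemma exists_householder {n : ℕ} (u : Fin (n+1) → ℝ) (hu : u ⬝ᵥ u = 1) :
    ∃ H : Matrix (Fin (n+1)) (Fin (n+1)) ℝ, Hᵀ * H = 1 ∧ ∀ i, H i 0 = u i := by
  classical
  set e : Fin (n+1) → ℝ := Pi.single 0 1 with hedef
  have he : ∀ j, e j = if j = 0 then 1 else 0 := by
    intro j; rw [hedef]; by_cases h : j = 0 <;> simp [Pi.single_apply, h]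
  set w : Fin (n+1) → ℝ := u - e with hwdef
  by_cases hw : w = 0
  · refine ⟨1, by simp, fun i => ?_⟩
    have hue : u = e := by
      have := hw; rwa [hwdef, sub_eq_zero] at this
    rw [hue, he]
    by_cases h : i = 0 <;> simp [Matrix.one_apply, h]
  · have hww : 0 < w ⬝ᵥ w := dot_self_pos hw
    set c : ℝ := 2 / (w ⬝ᵥ w) with hc
    set H : Matrix (Fin (n+1)) (Fin (n+1)) ℝ := 1 - c • vecMulVec w w with hH
    have hsymm : Hᵀ = H := by
      rw [hH]
      ext i j
      rw [transpose_apply]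
      simp only [Matrix.sub_apply, Matrix.smul_apply, vecMulVec_apply, smul_eq_mul]
      by_cases h : i = j
      · subst h; rfl
      · rw [Matrix.one_apply_ne h, Matrix.one_apply_ne (Ne.symm h)]; ring
    have hWW : (vecMulVec w w) * (vecMulVec w w) = (w ⬝ᵥ w) • vecMulVec w w := by
      ext i j
      simp only [mul_apply, vecMulVec_apply, Matrix.smul_apply, smul_eq_mul, dotProduct]
      rw [Finset.sum_mul]
      congr 1
      ext s
      ring
    have hcc : c * (c * (w ⬝ᵥ w)) = c + c := by
      rw [hc]; field_simp; ring
    have horth : Hᵀ * H = 1 := by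
      rw [hsymm, hH]
      simp only [sub_mul, mul_sub, one_mul, mul_one, smul_mul_assoc, mul_smul_comm,
        hWW, smul_smul, smul_sub]
      rw [hcc, add_smul]
      abel
    have hu0 : w ⬝ᵥ w = 2 * (1 - u 0) := by
      have expand : ∀ j, w j * w j = u j * u j - 2 * (e j * u j) + e j * e j := by
        intro j; rw [hwdef]; simp only [Pi.sub_apply]; ring
      have h2 : ∑ j, e j * u j = u 0 := by
        rw [Finset.sum_eq_single 0]
        · rw [he]; simp
        · intro b _ hb; rw [he]; simp [hb]
        · simp
      have h3 : ∑ j, e j * e j = 1 := by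
        rw [Finset.sum_eq_single 0]
        · rw [he]; simp
        · intro b _ hb; rw [he]; simp [hb]
        · simp
      calc w ⬝ᵥ w = ∑ j, w j * w j := rfl
        _ = ∑ j, (u j * u j - 2 * (e j * u j) + e j * e j) :=
            Finset.sum_congr rfl (fun j _ => expand j)
        _ = (∑ j, u j * u j) - 2 * (∑ j, e j * u j) + ∑ j, e j * e j := by
            rw [Finset.sum_add_distrib, Finset.sum_sub_distrib, Finset.mul_sum]
        _ = 1 - 2 * u 0 + 1 := by rw [show ∑ j, u j * u j = u ⬝ᵥ u from rfl, hu, h2, h3]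
        _ = 2 * (1 - u 0) := by ring
    have hcol : ∀ i, H i 0 = u i := by
      intro i
      have hw0 : w 0 = u 0 - 1 := by rw [hwdef]; simp [he]
      have hne : (1 : ℝ) - u 0 ≠ 0 := by
        intro h0; rw [hu0, h0] at hww; simp at hww
      have hcw0 : c * w 0 = -1 := by
        rw [hc, hw0, hu0]; field_simp; ring
      rw [hH]
      simp only [Matrix.sub_apply, Matrix.smul_apply, vecMulVec_apply, smul_eq_mul]
      have hkey : c * (w i * w 0) = -w i := by
        rw [show c * (w i * w 0) = (c * w 0) * w i by ring, hcw0]; ring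
      rw [hkey]
      by_cases h : i = 0
      · subst h; rw [Matrix.one_apply_eq, hw0]; ring
      · rw [Matrix.one_apply_ne h, hwdef]; simp [he, h]
    exact ⟨H, horth, hcol⟩



def GSDex (n : ℕ) (Y : Fin 2 → Matrix (Fin n) (Fin n) ℝ) : Prop :=
  ∃ (Qa Qb : Matrix (Fin n) (Fin n) ℝ) (R : Fin 2 → Matrix (Fin n) (Fin n) ℝ),
    Qaᵀ * Qa = 1 ∧ Qbᵀ * Qb = 1 ∧
    (∀ k, (R k).BlockTriangular id) ∧ (∀ k, Y k = Qa * R k * Qbᵀ)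

def mext {n : ℕ} (B : Matrix (Fin n) (Fin n) ℝ) : Matrix (Fin (n+1)) (Fin (n+1)) ℝ :=
  Matrix.of fun i j =>
    Fin.cases (Fin.cases 1 (fun _ => 0) j) (fun i' => Fin.cases 0 (fun j' => B i' j') j) i

@[simp] lemma mext_zz {n : ℕ} (B : Matrix (Fin n) (Fin n) ℝ) : mext B 0 0 = 1 := rfl
@[simp] lemma mext_sz {n : ℕ} (B : Matrix (Fin n) (Fin n) ℝ) (i : Fin n) :
    mext B i.succ 0 = 0 := by simp [mext]
@[simp] lemma mext_zs {n : ℕ} (B : Matrix (Fin n) (Fin n) ℝ) (j : Fin n) :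
    mext B 0 j.succ = 0 := by simp [mext]
@[simp] lemma mext_ss {n : ℕ} (B : Matrix (Fin n) (Fin n) ℝ) (i j : Fin n) :
    mext B i.succ j.succ = B i j := by simp [mext]

lemma mext_transpose {n : ℕ} (B : Matrix (Fin n) (Fin n) ℝ) : (mext B)ᵀ = mext Bᵀ := by
  ext i j
  rw [transpose_apply]
  induction i using Fin.cases <;> induction j using Fin.cases <;> simp

lemma mext_mul {n : ℕ} (B C : Matrix (Fin n) (Fin n) ℝ) : mext B * mext C = mext (B * C) := by
  ext i j
  rw [mul_apply, Fin.sum_univ_succ]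
  induction i using Fin.cases <;> induction j using Fin.cases <;>
    simp [mul_apply]

lemma mext_one {n : ℕ} : mext (1 : Matrix (Fin n) (Fin n) ℝ) = 1 := by
  ext i j
  induction i using Fin.cases <;> induction j using Fin.cases <;>
    simp [Matrix.one_apply, Fin.succ_ne_zero, (Fin.succ_ne_zero _).symm, Fin.succ_inj]

lemma mext_mulVec_single {n : ℕ} (B : Matrix (Fin n) (Fin n) ℝ) :
    mext B *ᵥ Pi.single 0 1 = Pi.single 0 1 := by
  funext i
  rw [mulVec, dotProduct_single]
  induction i using Fin.cases <;> simp [Pi.single_apply, (Fin.succ_ne_zero _)]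

lemma tri_aux {n : ℕ} (A : Matrix (Fin (n+1)) (Fin (n+1)) ℝ)
    (P Q : Matrix (Fin n) (Fin n) ℝ)
    (hAcol : ∀ i : Fin n, A i.succ 0 = 0)
    (htri : (Pᵀ * (A.submatrix Fin.succ Fin.succ) * Q).BlockTriangular id) :
    ((mext P)ᵀ * A * mext Q).BlockTriangular id := by
  intro i j hij
  simp only [id] at hij
  have hi0 : i ≠ 0 := by
    rintro rfl; exact absurd hij (Fin.not_lt_zero j)
  obtain ⟨i', rfl⟩ : ∃ i', i = i'.succ := ⟨i.pred hi0, (Fin.succ_pred i hi0).symm⟩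
  have hrow : ∀ t, ((mext P)ᵀ * A) i'.succ t = ∑ s' : Fin n, P s' i' * A s'.succ t := by
    intro t
    rw [mul_apply, Fin.sum_univ_succ]
    simp [transpose_apply]
  induction j using Fin.cases with
  | zero =>
    rw [mul_apply, Fin.sum_univ_succ]
    simp only [hrow]
    simp [hAcol]
  | succ j' =>
    have hij' : j' < i' := by
      rwa [Fin.succ_lt_succ_iff] at hij
    rw [mul_apply, Fin.sum_univ_succ]
    simp only [hrow, mext_sz, mext_zs, mext_ss, mul_zero, zero_add]
    have := htri (show id j' < id i' from hij')
    rw [mul_apply] at this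
    have expand : ∀ t', (Pᵀ * A.submatrix Fin.succ Fin.succ) i' t' =
        ∑ s' : Fin n, P s' i' * A s'.succ t'.succ := by
      intro t'
      rw [mul_apply]
      simp [transpose_apply, submatrix_apply]
    rw [Finset.sum_congr rfl (fun t' _ => by rw [expand t'])] at this
    exact this

lemma assemble {n : ℕ}
    (IH : ∀ Z : Fin 2 → Matrix (Fin n) (Fin n) ℝ,
      (∀ t : ℝ, (Z 0 + t • Z 1).det = 0) → GSDex n Z)
    (Y : Fin 2 → Matrix (Fin (n+1)) (Fin (n+1)) ℝ)
    (v u : Fin (n+1) → ℝ) (hv : v ⬝ᵥ v = 1) (hu : u ⬝ᵥ u = 1)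
    (α : Fin 2 → ℝ) (hYv : ∀ k, Y k *ᵥ v = α k • u)
    (hcomp : ∀ t : ℝ, ∃ x : Fin (n+1) → ℝ,
      x ≠ 0 ∧ v ⬝ᵥ x = 0 ∧ ∃ c : ℝ, (Y 0 + t • Y 1) *ᵥ x = c • u) :
    GSDex (n+1) Y := by
  classical
  obtain ⟨Hu, hHuo, hHuc⟩ := exists_householder u hu
  obtain ⟨Hv, hHvo, hHvc⟩ := exists_householder v hv
  have hHuo' : Hu * Huᵀ = 1 := mul_eq_one_comm.mp hHuo
  have hHvo' : Hv * Hvᵀ = 1 := mul_eq_one_comm.mp hHvo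
  set e : Fin (n+1) → ℝ := Pi.single 0 1 with hedef
  have hHve : Hv *ᵥ e = v := by
    funext i; rw [hedef, mulVec, dotProduct_single, mul_one, hHvc]
  have hHuTu : Huᵀ *ᵥ u = e := by
    funext i
    have : (Huᵀ *ᵥ u) i = (Huᵀ * Hu) i 0 := by
      rw [mulVec, mul_apply, dotProduct]
      exact Finset.sum_congr rfl fun s _ => by rw [transpose_apply, hHuc, mul_comm]
    rw [this, hHuo, hedef]
    by_cases h : i = 0 <;> simp [Matrix.one_apply, h, Pi.single_apply]
  set A : Fin 2 → Matrix (Fin (n+1)) (Fin (n+1)) ℝ := fun k => Huᵀ * Y k * Hv with hAdef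
  have hAe : ∀ k, A k *ᵥ e = α k • e := by
    intro k
    rw [hAdef]
    rw [← mulVec_mulVec, ← mulVec_mulVec, hHve, hYv k, mulVec_smul, hHuTu]
  have hAcol : ∀ k (i : Fin n), A k i.succ 0 = 0 := by
    intro k i
    have : A k i.succ 0 = (A k *ᵥ e) i.succ := by
      rw [hedef, mulVec, dotProduct_single, mul_one]
    rw [this, hAe k]
    simp [hedef, Pi.single_apply, Fin.succ_ne_zero]
  set Z : Fin 2 → Matrix (Fin n) (Fin n) ℝ :=
    fun k => (A k).submatrix Fin.succ Fin.succ with hZdef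
  have hZsing : ∀ t : ℝ, (Z 0 + t • Z 1).det = 0 := by
    intro t
    obtain ⟨x, hx0, hvx, c, hMx⟩ := hcomp t
    set y' : Fin (n+1) → ℝ := Hvᵀ *ᵥ x with hy'def
    have hy'0 : y' 0 = 0 := by
      rw [hy'def, mulVec, dotProduct]
      rw [← hvx, dotProduct]
      exact Finset.sum_congr rfl fun s _ => by rw [transpose_apply, hHvc]
    set y : Fin n → ℝ := fun i => y' i.succ with hydef
    have hy0 : y ≠ 0 := by
      intro hy
      have hy'z : y' = 0 := by
        funext i
        induction i using Fin.cases with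
        | zero => exact hy'0
        | succ i' => exact congrFun hy i'
      apply hx0
      have : Hv *ᵥ y' = x := by
        rw [hy'def, mulVec_mulVec, hHvo', one_mulVec]
      rw [← this, hy'z, mulVec_zero]
    have hBy' : (A 0 + t • A 1) *ᵥ y' = c • e := by
      have hB : A 0 + t • A 1 = Huᵀ * (Y 0 + t • Y 1) * Hv := by
        rw [hAdef]
        simp only [Matrix.mul_add, Matrix.add_mul, Matrix.smul_mul, Matrix.mul_smul]
      have hxx : Hv *ᵥ (Hvᵀ *ᵥ x) = x := by
        rw [mulVec_mulVec, hHvo', one_mulVec]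
      rw [hB, hy'def, ← mulVec_mulVec, ← mulVec_mulVec, hxx, hMx, mulVec_smul, hHuTu]
    have hZy : (Z 0 + t • Z 1) *ᵥ y = 0 := by
      funext i
      have h1 : ((Z 0 + t • Z 1) *ᵥ y) i
          = ∑ j' : Fin n, (A 0 + t • A 1) i.succ j'.succ * y' j'.succ := by
        rw [mulVec, dotProduct]
        refine Finset.sum_congr rfl fun j' _ => ?_
        rw [hZdef]
        simp [submatrix_apply, hydef]
      have h2 : ((A 0 + t • A 1) *ᵥ y') i.succ = 0 := by
        rw [hBy']
        simp [hedef, Pi.single_apply, Fin.succ_ne_zero]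
      rw [mulVec, dotProduct, Fin.sum_univ_succ, hy'0, mul_zero, zero_add] at h2
      rw [h1, h2]
      rfl
    exact (Matrix.exists_mulVec_eq_zero_iff).mp ⟨y, hy0, hZy⟩
  obtain ⟨Qa', Qb', R', hoa', hob', htri', heq'⟩ := IH Z hZsing
  have hoa'' : Qa' * Qa'ᵀ = 1 := mul_eq_one_comm.mp hoa'
  have hob'' : Qb' * Qb'ᵀ = 1 := mul_eq_one_comm.mp hob'
  refine ⟨Hu * mext Qa', Hv * mext Qb', fun k => (Hu * mext Qa')ᵀ * Y k * (Hv * mext Qb'),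
    ?_, ?_, ?_, ?_⟩
  · rw [transpose_mul, mul_assoc, ← mul_assoc Huᵀ, hHuo, one_mul, mext_transpose,
      mext_mul, hoa', mext_one]
  · rw [transpose_mul, mul_assoc, ← mul_assoc Hvᵀ, hHvo, one_mul, mext_transpose,
      mext_mul, hob', mext_one]
  · intro k
    show ((Hu * mext Qa')ᵀ * Y k * (Hv * mext Qb')).BlockTriangular id
    have hform : (Hu * mext Qa')ᵀ * Y k * (Hv * mext Qb')
        = (mext Qa')ᵀ * A k * mext Qb' := by
      rw [hAdef, transpose_mul]
      simp only [mul_assoc]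
    rw [hform]
    refine tri_aux (A k) Qa' Qb' (hAcol k) ?_
    have hR' : Qa'ᵀ * Z k * Qb' = R' k := by
      rw [heq' k]
      rw [← mul_assoc, ← mul_assoc, hoa', one_mul, mul_assoc, hob', mul_one]
    rw [hR']
    exact htri' k
  · intro k
    show Y k = (Hu * mext Qa') * ((Hu * mext Qa')ᵀ * Y k * (Hv * mext Qb')) * (Hv * mext Qb')ᵀ
    have ho1 : (Hu * mext Qa') * (Hu * mext Qa')ᵀ = 1 := by
      rw [transpose_mul, mul_assoc, ← mul_assoc (mext Qa'), mext_transpose, mext_mul,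
        hoa'', mext_one, one_mul, hHuo']
    have ho2 : (Hv * mext Qb') * (Hv * mext Qb')ᵀ = 1 := by
      rw [transpose_mul, mul_assoc, ← mul_assoc (mext Qb'), mext_transpose, mext_mul,
        hob'', mext_one, one_mul, hHvo']
    set QA := Hu * mext Qa'
    set QB := Hv * mext Qb'
    calc Y k = (QA * QAᵀ) * Y k * (QB * QBᵀ) := by rw [ho1, ho2, one_mul, mul_one]
      _ = QA * (QAᵀ * Y k * QB) * QBᵀ := by
          simp only [mul_assoc]



variable {N : ℕ}

/-- The pencil as a polynomial matrix. -/
def pmat (Y0 Y1 : Matrix (Fin N) (Fin N) ℝ) : Matrix (Fin N) (Fin N) (Polynomial ℝ) :=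
  Matrix.of fun i j => C (Y0 i j) + X * C (Y1 i j)

lemma pmat_map_eval (Y0 Y1 : Matrix (Fin N) (Fin N) ℝ) (t : ℝ) :
    (pmat Y0 Y1).map (evalRingHom t) = Y0 + t • Y1 := by
  ext i j
  simp only [pmat, Matrix.map_apply, Matrix.of_apply, coe_evalRingHom, eval_add, eval_mul,
    eval_C, eval_X, Matrix.add_apply, Matrix.smul_apply, smul_eq_mul]

lemma pmat_det_eq_zero {Y0 Y1 : Matrix (Fin N) (Fin N) ℝ}
    (h : ∀ t : ℝ, (Y0 + t • Y1).det = 0) : (pmat Y0 Y1).det = 0 := by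
  apply Polynomial.eq_zero_of_infinite_isRoot
  apply Set.infinite_of_injective_forall_mem (f := fun t : ℝ => t)
  case hi => exact fun a b hab => hab
  case hf =>
    intro t
    simp only [Set.mem_setOf_eq, IsRoot.def]
    have := RingHom.map_det (evalRingHom t) (pmat Y0 Y1)
    rw [RingHom.mapMatrix_apply, pmat_map_eval] at this
    rw [show eval t (pmat Y0 Y1).det = (evalRingHom t) (pmat Y0 Y1).det from rfl, this, h t]

lemma exists_poly_kernel {Y0 Y1 : Matrix (Fin N) (Fin N) ℝ} (hN : 0 < N)
    (h : ∀ t : ℝ, (Y0 + t • Y1).det = 0) :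
    ∃ p : Fin N → Polynomial ℝ, p ≠ 0 ∧ pmat Y0 Y1 *ᵥ p = 0 := by
  have := (Matrix.exists_mulVec_eq_zero_iff (M := pmat Y0 Y1)).mpr (pmat_det_eq_zero h)
  obtain ⟨p, hp, hker⟩ := this
  exact ⟨p, hp, hker⟩

lemma eval_kernel {Y0 Y1 : Matrix (Fin N) (Fin N) ℝ} {q : Fin N → Polynomial ℝ}
    (hker : pmat Y0 Y1 *ᵥ q = 0) (t : ℝ) :
    (Y0 + t • Y1) *ᵥ (fun i => (q i).eval t) = 0 := by
  funext i
  have h0 : (pmat Y0 Y1 *ᵥ q) i = 0 := by rw [hker]; rfl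
  have : eval t ((pmat Y0 Y1 *ᵥ q) i) = 0 := by rw [h0]; simp
  rw [mulVec, dotProduct] at this ⊢
  rw [Polynomial.eval_finset_sum] at this
  simp only [Pi.zero_apply]
  rw [← this]
  refine Finset.sum_congr rfl fun j _ => ?_
  simp only [pmat, Matrix.of_apply, eval_mul, eval_add, eval_C, eval_X,
    Matrix.add_apply, Matrix.smul_apply, smul_eq_mul]

lemma coeff_kernel_top {Y0 Y1 : Matrix (Fin N) (Fin N) ℝ} {p : Fin N → Polynomial ℝ}
    (hker : pmat Y0 Y1 *ᵥ p = 0) (d : ℕ) (hd : ∀ j, (p j).natDegree ≤ d) :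
    Y1 *ᵥ (fun j => (p j).coeff d) = 0 := by
  funext i
  have h0 : (pmat Y0 Y1 *ᵥ p) i = 0 := by rw [hker]; rfl
  have hc : ((pmat Y0 Y1 *ᵥ p) i).coeff (d+1) = 0 := by rw [h0]; rfl
  rw [mulVec, dotProduct, finset_sum_coeff] at hc
  have step : ∀ j, (pmat Y0 Y1 i j * p j).coeff (d+1) = Y1 i j * (p j).coeff d := by
    intro j
    rw [pmat]
    simp only [Matrix.of_apply]
    rw [add_mul, coeff_add, coeff_C_mul, mul_assoc, coeff_X_mul, coeff_C_mul,
      coeff_eq_zero_of_natDegree_lt (lt_of_le_of_lt (hd j) (Nat.lt_succ_self d)),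
      mul_zero, zero_add]
  rw [Finset.sum_congr rfl fun j _ => step j] at hc
  rw [mulVec, dotProduct]
  exact hc

lemma dot_self_pos' {n : ℕ} {w : Fin n → ℝ} (hw : w ≠ 0) : 0 < w ⬝ᵥ w := by
  rcases Function.ne_iff.mp hw with ⟨i, hi⟩
  calc (0:ℝ) < w i * w i := mul_self_pos.mpr hi
    _ ≤ w ⬝ᵥ w :=
      Finset.single_le_sum (f := fun j => w j * w j)
        (fun j _ => mul_self_nonneg _) (Finset.mem_univ i)

lemma exists_unit_scale {z : Fin N → ℝ} (hz : z ≠ 0) :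
    ∃ (c : ℝ) (v : Fin N → ℝ), 0 < c ∧ v ⬝ᵥ v = 1 ∧ z = c • v := by
  have hzz : 0 < z ⬝ᵥ z := dot_self_pos' hz
  refine ⟨Real.sqrt (z ⬝ᵥ z), (Real.sqrt (z ⬝ᵥ z))⁻¹ • z, Real.sqrt_pos.mpr hzz, ?_, ?_⟩
  · rw [smul_dotProduct, dotProduct_smul, smul_eq_mul, smul_eq_mul, ← mul_assoc,
      ← mul_inv, Real.mul_self_sqrt hzz.le]
    exact inv_mul_cancel₀ hzz.ne'
  · rw [smul_smul, mul_inv_cancel₀ (Real.sqrt_pos.mpr hzz).ne', one_smul]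

lemma caseB (Y : Fin 2 → Matrix (Fin N) (Fin N) ℝ)
    (h : ∀ t : ℝ, (Y 0 + t • Y 1).det = 0) (hN : 0 < N)
    (hnck : ¬ ∃ z : Fin N → ℝ, z ≠ 0 ∧ Y 0 *ᵥ z = 0 ∧ Y 1 *ᵥ z = 0) :
    ∃ (v u : Fin N → ℝ) (α : Fin 2 → ℝ), v ⬝ᵥ v = 1 ∧ u ⬝ᵥ u = 1 ∧
      (∀ k, Y k *ᵥ v = α k • u) ∧
      ∀ t : ℝ, ∃ x, x ≠ 0 ∧ v ⬝ᵥ x = 0 ∧ ∃ c : ℝ, (Y 0 + t • Y 1) *ᵥ x = c • u := by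
  classical
  obtain ⟨p, hp0, hker⟩ := exists_poly_kernel hN h
  set d : ℕ := Finset.univ.sup (fun i => (p i).natDegree) with hddef
  have hdle : ∀ j, (p j).natDegree ≤ d := fun j =>
    Finset.le_sup (f := fun i => (p i).natDegree) (Finset.mem_univ j)
  set xd : Fin N → ℝ := fun i => (p i).coeff d with hxddef
  have hxd0 : xd ≠ 0 := by
    obtain ⟨i₀, hi₀⟩ := Function.ne_iff.mp hp0
    simp only [Pi.zero_apply] at hi₀
    obtain ⟨i₁, -, hi₁⟩ := Finset.exists_mem_eq_sup (Finset.univ : Finset (Fin N))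
      ⟨i₀, Finset.mem_univ i₀⟩ (fun i => (p i).natDegree)
    by_cases hp1 : p i₁ = 0
    · have hd0 : d = 0 := by rw [hddef, hi₁, hp1, natDegree_zero]
      intro hc
      apply hi₀
      have hdeg : (p i₀).natDegree = 0 := le_antisymm (hd0 ▸ hdle i₀) (Nat.zero_le _)
      have hcoeff : (p i₀).coeff 0 = 0 := by
        have := congrFun hc i₀; simpa [hxddef, hd0] using this
      rw [Polynomial.eq_C_of_natDegree_eq_zero hdeg, hcoeff, map_zero]
    · intro hc
      have hcz : (p i₁).coeff d = 0 := by
        have := congrFun hc i₁; simpa [hxddef] using this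
      rw [hddef, hi₁] at hcz
      exact hp1 (Polynomial.leadingCoeff_eq_zero.mp hcz)
  
  have hY1xd : Y 1 *ᵥ xd = 0 := coeff_kernel_top hker d hdle
  set u' : Fin N → ℝ := Y 0 *ᵥ xd with hu'def
  have hu'0 : u' ≠ 0 := by
    intro hz
    exact hnck ⟨xd, hxd0, hz, hY1xd⟩
  obtain ⟨cv, v, hcv, hvv, hxdv⟩ := exists_unit_scale hxd0
  obtain ⟨cu, u, hcu, huu, hu'u⟩ := exists_unit_scale hu'0
  have hveq : v = cv⁻¹ • xd := by
    rw [hxdv, smul_smul, inv_mul_cancel₀ hcv.ne', one_smul]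
  have hY0v : Y 0 *ᵥ v = (cv⁻¹ * cu) • u := by
    rw [hveq, mulVec_smul, ← hu'def, hu'u, smul_smul]
  have hY1v : Y 1 *ᵥ v = 0 := by
    rw [hveq, mulVec_smul, hY1xd, smul_zero]
  have hMv : ∀ t : ℝ, (Y 0 + t • Y 1) *ᵥ v = (cv⁻¹ * cu) • u := by
    intro t
    rw [add_mulVec, smul_mulVec, hY0v, hY1v, smul_zero, add_zero]
  have hu0 : u ≠ 0 := by
    intro hz
    rw [hz] at huu
    simp at huu
  have hcvcu : cv⁻¹ * cu ≠ 0 := by positivity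
  refine ⟨v, u, ![cv⁻¹ * cu, 0], hvv, huu, ?_, ?_⟩
  · intro k
    fin_cases k
    · simpa using hY0v
    · simpa using hY1v
  · intro t
    obtain ⟨i₀, hi₀⟩ := Function.ne_iff.mp hp0
    simp only [Pi.zero_apply] at hi₀
    set S : Finset (Fin N) := Finset.univ.filter (fun i => p i ≠ 0) with hSdef
    have hSne : S.Nonempty := ⟨i₀, by simp [hSdef, hi₀]⟩
    set mlt : ℕ := S.inf' hSne (fun i => rootMultiplicity t (p i)) with hmltdef
    have hdvd : ∀ i, (X - C t)^mlt ∣ p i := by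
      intro i
      by_cases hpi : p i = 0
      · rw [hpi]; exact dvd_zero _
      · have hle : mlt ≤ rootMultiplicity t (p i) :=
          Finset.inf'_le _ (by simp [hSdef, hpi])
        exact dvd_trans (pow_dvd_pow _ hle) (Polynomial.pow_rootMultiplicity_dvd _ _)
    choose q hq using fun i => (hdvd i)
    have hqker : pmat (Y 0) (Y 1) *ᵥ q = 0 := by
      have hXt : (X - C t) ^ mlt ≠ (0 : Polynomial ℝ) :=
        pow_ne_zero _ (Polynomial.X_sub_C_ne_zero t)
      funext i
      have h0 : (pmat (Y 0) (Y 1) *ᵥ p) i = 0 := by rw [hker]; rfl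
      rw [mulVec, dotProduct] at h0
      have hfac : ∑ j, pmat (Y 0) (Y 1) i j * p j
          = (X - C t)^mlt * ∑ j, pmat (Y 0) (Y 1) i j * q j := by
        rw [Finset.mul_sum]
        refine Finset.sum_congr rfl fun j _ => ?_
        rw [hq j]; ring
      rw [hfac] at h0
      rcases mul_eq_zero.mp h0 with h' | h'
      · exact absurd h' hXt
      · rw [mulVec, dotProduct]; exact h'
    obtain ⟨is, hisS, his⟩ := Finset.exists_mem_eq_inf' hSne (fun i => rootMultiplicity t (p i))
    have hpis : p is ≠ 0 := by
      have := hisS; rw [hSdef, Finset.mem_filter] at this; exact this.2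
    have hqis : (q is).eval t ≠ 0 := by
      intro hz
      have hdvd1 : (X - C t)^(mlt+1) ∣ p is := by
        rw [hq is, pow_succ]
        exact mul_dvd_mul_left _ (Polynomial.dvd_iff_isRoot.mpr hz)
      have := (Polynomial.le_rootMultiplicity_iff hpis).mpr hdvd1
      rw [← his] at this
      omega
    set xt : Fin N → ℝ := fun i => (q i).eval t with hxtdef
    have hxtne : xt ≠ 0 := by
      intro hz
      exact hqis (by have := congrFun hz is; simpa [hxtdef] using this)
    have hMxt : (Y 0 + t • Y 1) *ᵥ xt = 0 := eval_kernel hqker t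
    refine ⟨xt - (v ⬝ᵥ xt) • v, ?_, ?_, -((v ⬝ᵥ xt) * (cv⁻¹ * cu)), ?_⟩
    · intro hz
      rw [sub_eq_zero] at hz
      have h1 : (0 : Fin N → ℝ) = (v ⬝ᵥ xt) • ((cv⁻¹ * cu) • u) := by
        rw [← hMv t, ← mulVec_smul, ← hz, hMxt]
      have h1' : ((v ⬝ᵥ xt) * (cv⁻¹ * cu)) • u = 0 := by
        rw [← smul_smul, ← h1]
      have h2 : (v ⬝ᵥ xt) * (cv⁻¹ * cu) = 0 := by
        rcases smul_eq_zero.mp h1' with h | h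
        · exact h
        · exact absurd h hu0
      have hvxt : v ⬝ᵥ xt = 0 := by
        rcases mul_eq_zero.mp h2 with h | h
        · exact h
        · exact absurd h hcvcu
      rw [hvxt, zero_smul] at hz
      exact hxtne (by rw [hz])
    · rw [dotProduct_sub, dotProduct_smul, smul_eq_mul, hvv, mul_one, sub_self]
    · rw [mulVec_sub, hMxt, mulVec_smul, hMv t, zero_sub, smul_smul, ← neg_smul]
lemma exists_unit_perp {m : ℕ} {w0 : Fin (m+2) → ℝ} (hw00 : w0 ≠ 0) :
    ∃ u : Fin (m+2) → ℝ, u ⬝ᵥ u = 1 ∧ w0 ⬝ᵥ u = 0 := by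
  obtain ⟨cw, w, hcw, hww, hw0w⟩ := exists_unit_scale hw00
  have key : ∃ z : Fin (m+2) → ℝ, z ≠ 0 ∧ w ⬝ᵥ z = 0 := by
    set z0 : Fin (m+2) → ℝ := Pi.single 0 1 - (w 0) • w with hz0
    set z1 : Fin (m+2) → ℝ := Pi.single 1 1 - (w 1) • w with hz1
    have hwz : ∀ i : Fin (m+2), w ⬝ᵥ (Pi.single i 1 - (w i) • w) = 0 := by
      intro i
      rw [dotProduct_sub, dotProduct_smul, dotProduct_single, hww, smul_eq_mul,
        mul_one, sub_self]
    by_cases h0 : z0 = 0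
    · refine ⟨z1, ?_, hwz 1⟩
      intro h1
      rw [hz0, sub_eq_zero] at h0
      rw [hz1, sub_eq_zero] at h1
      have e00 := congrFun h0 0
      have e01 := congrFun h0 1
      have e11 := congrFun h1 1
      simp only [Pi.single_apply, Pi.smul_apply, smul_eq_mul] at e00 e01 e11
      norm_num at e00 e01 e11
      rcases e01 with h | h
      · rw [h] at e00; norm_num at e00
      · rw [h] at e11; norm_num at e11
    · exact ⟨z0, h0, hwz 0⟩
  obtain ⟨z, hz0, hwz⟩ := key
  obtain ⟨cz, u, hcz, huu, hzu⟩ := exists_unit_scale hz0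
  refine ⟨u, huu, ?_⟩
  have : w0 ⬝ᵥ z = 0 := by
    rw [hw0w, smul_dotProduct, hwz, smul_eq_mul, mul_zero]
  rw [hzu, dotProduct_smul] at this
  rcases smul_eq_zero.mp this with h | h
  · exact absurd h hcz.ne'
  · exact h

lemma caseA {m : ℕ} (Y : Fin 2 → Matrix (Fin (m+2)) (Fin (m+2)) ℝ)
    (v0 : Fin (m+2) → ℝ) (hv00 : v0 ≠ 0) (hkv0 : Y 0 *ᵥ v0 = 0) (hkv1 : Y 1 *ᵥ v0 = 0)
    (w0 : Fin (m+2) → ℝ) (hw00 : w0 ≠ 0) (hkw0 : w0 ᵥ* Y 0 = 0) (hkw1 : w0 ᵥ* Y 1 = 0) :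
    ∃ (v u : Fin (m+2) → ℝ) (α : Fin 2 → ℝ), v ⬝ᵥ v = 1 ∧ u ⬝ᵥ u = 1 ∧
      (∀ k, Y k *ᵥ v = α k • u) ∧
      ∀ t : ℝ, ∃ x, x ≠ 0 ∧ v ⬝ᵥ x = 0 ∧ ∃ c : ℝ, (Y 0 + t • Y 1) *ᵥ x = c • u := by
  classical
  obtain ⟨cv, v, hcv, hvv, hv0v⟩ := exists_unit_scale hv00
  have hveq : v = cv⁻¹ • v0 := by
    rw [hv0v, smul_smul, inv_mul_cancel₀ hcv.ne', one_smul]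
  have hY0v : Y 0 *ᵥ v = 0 := by rw [hveq, mulVec_smul, hkv0, smul_zero]
  have hY1v : Y 1 *ᵥ v = 0 := by rw [hveq, mulVec_smul, hkv1, smul_zero]
  obtain ⟨u, huu, hw0u⟩ := exists_unit_perp hw00
  have hu0 : u ≠ 0 := by
    intro hz; rw [hz] at huu; simp at huu
  have hv0 : v ≠ 0 := by
    intro hz; rw [hz] at hvv; simp at hvv
  refine ⟨v, u, fun _ => 0, hvv, huu, ?_, ?_⟩
  · intro k
    fin_cases k
    · simpa using hY0v
    · simpa using hY1v
  · intro t
    set M : Matrix (Fin (m+2)) (Fin (m+2)) ℝ := Y 0 + t • Y 1 with hMdef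
    have hMv : M *ᵥ v = 0 := by
      rw [hMdef, add_mulVec, smul_mulVec, hY0v, hY1v, smul_zero, add_zero]
    have hwM : ∀ z, w0 ⬝ᵥ (M *ᵥ z) = 0 := by
      intro z
      rw [hMdef, add_mulVec, smul_mulVec, dotProduct_add, dotProduct_smul,
        dotProduct_mulVec, dotProduct_mulVec, hkw0, hkw1]
      simp
    by_cases hex : ∃ z, M *ᵥ z = u
    · obtain ⟨z, hz⟩ := hex
      refine ⟨z - (v ⬝ᵥ z) • v, ?_, ?_, 1, ?_⟩
      · intro hc
        rw [sub_eq_zero] at hc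
        have : u = 0 := by
          rw [← hz, hc, mulVec_smul, hMv, smul_zero]
        exact hu0 this
      · rw [dotProduct_sub, dotProduct_smul, smul_eq_mul, hvv, mul_one, sub_self]
      · rw [mulVec_sub, hz, mulVec_smul, hMv, smul_zero, sub_zero, one_smul]
    · -- rank argument
      set f := M.mulVecLin with hfdef
      set φ : (Fin (m+2) → ℝ) →ₗ[ℝ] ℝ :=
        { toFun := fun z => w0 ⬝ᵥ z
          map_add' := fun a b => dotProduct_add w0 a b
          map_smul' := fun c a => by simp [dotProduct_smul] } with hφdef
      have hrange : LinearMap.range f ≤ LinearMap.ker φ := by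
        rintro y ⟨z, rfl⟩
        show w0 ⬝ᵥ (M *ᵥ z) = 0
        exact hwM z
      have huW : u ∈ LinearMap.ker φ := hw0u
      have hunr : u ∉ LinearMap.range f := by
        intro hmem
        obtain ⟨z, hz⟩ := hmem
        exact hex ⟨z, hz⟩
      have hlt : LinearMap.range f < LinearMap.ker φ :=
        lt_of_le_of_ne hrange (fun he => hunr (he ▸ huW))
      have hWlt : LinearMap.ker φ < ⊤ := by
        rw [lt_top_iff_ne_top]
        intro he
        have : φ w0 = 0 := by rw [← LinearMap.mem_ker, he]; trivial
        have hww : w0 ⬝ᵥ w0 = 0 := this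
        exact hw00 (by
          by_contra h
          exact absurd hww (dot_self_pos' h).ne')
      have h1 : Module.finrank ℝ ↥(LinearMap.range f) < Module.finrank ℝ ↥(LinearMap.ker φ) :=
        Submodule.finrank_lt_finrank_of_lt hlt
      have h2 : Module.finrank ℝ ↥(LinearMap.ker φ) < m + 2 := by
        have := Submodule.finrank_lt (K := ℝ) (V := Fin (m+2) → ℝ) hWlt.ne
        rwa [Module.finrank_fin_fun] at this
      have h3 := LinearMap.finrank_range_add_finrank_ker f
      rw [Module.finrank_fin_fun] at h3
      have hker2 : 2 ≤ Module.finrank ℝ ↥(LinearMap.ker f) := by omega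
      have hspan1 : Module.finrank ℝ ↥(Submodule.span ℝ {v}) = 1 :=
        finrank_span_singleton hv0
      have hnle : ¬ (LinearMap.ker f ≤ Submodule.span ℝ {v}) := by
        intro hle
        have := Submodule.finrank_mono hle
        omega
      obtain ⟨x', hx'ker, hx'span⟩ := SetLike.not_le_iff_exists.mp hnle
      have hMx' : M *ᵥ x' = 0 := hx'ker
      refine ⟨x' - (v ⬝ᵥ x') • v, ?_, ?_, 0, ?_⟩
      · intro hc
        rw [sub_eq_zero] at hc
        exact hx'span (hc ▸ Submodule.smul_mem _ _ (Submodule.mem_span_singleton_self v))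
      · rw [dotProduct_sub, dotProduct_smul, smul_eq_mul, hvv, mul_one, sub_self]
      · rw [mulVec_sub, hMx', mulVec_smul, hMv, smul_zero, sub_zero, zero_smul]
lemma sum_rev {n : ℕ} (f : Fin n → ℝ) : ∑ t, f (Fin.rev t) = ∑ t, f t :=
  Fintype.sum_equiv Fin.revPerm _ _ (fun x => rfl)

lemma gsd_transpose {n : ℕ} (Y : Fin 2 → Matrix (Fin n) (Fin n) ℝ)
    (h : GSDex n (fun k => (Y k)ᵀ)) : GSDex n Y := by
  obtain ⟨Qa, Qb, R, hoa, hob, htri, heq⟩ := h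
  refine ⟨Qb.submatrix id Fin.rev, Qa.submatrix id Fin.rev,
    fun k => ((R k)ᵀ).submatrix Fin.rev Fin.rev, ?_, ?_, ?_, ?_⟩
  · ext i j
    have hentry : ((Qb.submatrix id Fin.rev)ᵀ * Qb.submatrix id Fin.rev) i j
        = (Qbᵀ * Qb) (Fin.rev i) (Fin.rev j) := by
      rw [mul_apply, mul_apply]
      exact Finset.sum_congr rfl fun s _ => by
        simp [submatrix_apply, transpose_apply]
    rw [hentry, hob]
    by_cases hh : i = j
    · subst hh; simp [Matrix.one_apply]
    · rw [Matrix.one_apply_ne (fun hc => hh (Fin.rev_inj.mp hc)),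
        Matrix.one_apply_ne hh]
  · ext i j
    have hentry : ((Qa.submatrix id Fin.rev)ᵀ * Qa.submatrix id Fin.rev) i j
        = (Qaᵀ * Qa) (Fin.rev i) (Fin.rev j) := by
      rw [mul_apply, mul_apply]
      exact Finset.sum_congr rfl fun s _ => by
        simp [submatrix_apply, transpose_apply]
    rw [hentry, hoa]
    by_cases hh : i = j
    · subst hh; simp [Matrix.one_apply]
    · rw [Matrix.one_apply_ne (fun hc => hh (Fin.rev_inj.mp hc)),
        Matrix.one_apply_ne hh]
  · intro k i j hij
    have : Fin.rev i < Fin.rev j := Fin.rev_lt_rev.mpr hij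
    exact htri k (show id (Fin.rev i) < id (Fin.rev j) from this)
  · intro k
    ext i j
    have hbase := congrFun (congrFun (heq k) j) i
    simp only [transpose_apply] at hbase
    have h1 : ∀ t, (Qa * R k) j t * (Qbᵀ) t i = ∑ s, Qa j s * R k s t * Qb i t := by
      intro t; rw [mul_apply, Finset.sum_mul, transpose_apply]
    have rhs : Y k i j = ∑ a, ∑ b, Qa j a * R k a b * Qb i b := by
      calc Y k i j = ∑ t, (Qa * R k) j t * Qbᵀ t i := by rw [hbase, mul_apply]
        _ = ∑ t, ∑ s, Qa j s * R k s t * Qb i t :=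
            Finset.sum_congr rfl fun t _ => h1 t
        _ = ∑ s, ∑ t, Qa j s * R k s t * Qb i t := Finset.sum_comm
    have h2 : ∀ t, (Qb.submatrix id Fin.rev * ((R k)ᵀ).submatrix Fin.rev Fin.rev) i t
        * ((Qa.submatrix id Fin.rev)ᵀ) t j
        = ∑ s, Qb i (Fin.rev s) * R k (Fin.rev t) (Fin.rev s) * Qa j (Fin.rev t) := by
      intro t
      rw [transpose_apply, mul_apply, Finset.sum_mul]
      refine Finset.sum_congr rfl fun s _ => ?_
      simp only [submatrix_apply, transpose_apply, id]
    have lhs : (Qb.submatrix id Fin.rev * ((R k)ᵀ).submatrix Fin.rev Fin.rev *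
        (Qa.submatrix id Fin.rev)ᵀ) i j = ∑ a, ∑ b, Qa j a * R k a b * Qb i b := by
      calc (Qb.submatrix id Fin.rev * ((R k)ᵀ).submatrix Fin.rev Fin.rev *
            (Qa.submatrix id Fin.rev)ᵀ) i j
          = ∑ t, (Qb.submatrix id Fin.rev * ((R k)ᵀ).submatrix Fin.rev Fin.rev) i t
            * ((Qa.submatrix id Fin.rev)ᵀ) t j := by rw [mul_apply]
        _ = ∑ t, ∑ s, Qb i (Fin.rev s) * R k (Fin.rev t) (Fin.rev s) * Qa j (Fin.rev t) :=
            Finset.sum_congr rfl fun t _ => h2 t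
        _ = ∑ t, ∑ s, Qb i (Fin.rev s) * R k t (Fin.rev s) * Qa j t :=
            sum_rev (fun t => ∑ s, Qb i (Fin.rev s) * R k t (Fin.rev s) * Qa j t)
        _ = ∑ t, ∑ s, Qb i s * R k t s * Qa j t :=
            Finset.sum_congr rfl fun t _ =>
              sum_rev (fun s => Qb i s * R k t s * Qa j t)
        _ = ∑ a, ∑ b, Qa j a * R k a b * Qb i b :=
            Finset.sum_congr rfl fun t _ => Finset.sum_congr rfl fun s _ => by ring
    rw [rhs]
    exact lhs.symm

lemma gsd_aux : ∀ (n : ℕ) (Y : Fin 2 → Matrix (Fin n) (Fin n) ℝ),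
    (∀ t : ℝ, (Y 0 + t • Y 1).det = 0) → GSDex n Y := by
  intro n
  induction n with
  | zero =>
    intro Y _
    exact ⟨1, 1, Y, by simp, by simp, fun k i j hij => Fin.elim0 i, fun k => by simp⟩
  | succ m IH =>
    intro Y h
    cases m with
    | zero =>
      refine ⟨1, 1, Y, by simp, by simp, fun k i j hij => ?_, fun k => by simp⟩
      have : j = i := by omega
      rw [this] at hij
      exact absurd hij (lt_irrefl _)
    | succ m' =>
      by_cases hck : ∃ z : Fin (m'+2) → ℝ, z ≠ 0 ∧ Y 0 *ᵥ z = 0 ∧ Y 1 *ᵥ z = 0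
      · by_cases hlk : ∃ w : Fin (m'+2) → ℝ, w ≠ 0 ∧ w ᵥ* Y 0 = 0 ∧ w ᵥ* Y 1 = 0
        · obtain ⟨z, hz, hz0, hz1⟩ := hck
          obtain ⟨w, hw, hw0, hw1⟩ := hlk
          obtain ⟨v, u, α, hvv, huu, hYv, hcomp⟩ := caseA Y z hz hz0 hz1 w hw hw0 hw1
          exact assemble IH Y v u hvv huu α hYv hcomp
        · apply gsd_transpose
          have ht : ∀ t : ℝ, ((fun k => (Y k)ᵀ) 0 + t • (fun k => (Y k)ᵀ) 1).det = 0 := by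
            intro t
            show ((Y 0)ᵀ + t • (Y 1)ᵀ).det = 0
            rw [← transpose_smul, ← transpose_add, det_transpose]
            exact h t
          have hnck : ¬ ∃ z : Fin (m'+2) → ℝ,
              z ≠ 0 ∧ (fun k => (Y k)ᵀ) 0 *ᵥ z = 0 ∧ (fun k => (Y k)ᵀ) 1 *ᵥ z = 0 := by
            rintro ⟨z, hz, h0, h1⟩
            apply hlk
            refine ⟨z, hz, ?_, ?_⟩
            · rw [← mulVec_transpose]; exact h0
            · rw [← mulVec_transpose]; exact h1
          obtain ⟨v, u, α, hvv, huu, hYv, hcomp⟩ :=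
            caseB (fun k => (Y k)ᵀ) ht (Nat.succ_pos _) hnck
          exact assemble IH (fun k => (Y k)ᵀ) v u hvv huu α hYv hcomp
      · obtain ⟨v, u, α, hvv, huu, hYv, hcomp⟩ := caseB Y h (Nat.succ_pos _) hck
        exact assemble IH Y v u hvv huu α hYv hcomp

end

open Matrix

theorem stmt3 (I : ℕ) (Y : Fin 2 → Matrix (Fin I) (Fin I) ℝ)
    (h : ∀ μ lam : ℝ, (μ • Y 0 + lam • Y 1).det = 0) :
    ∃ (Qa Qb : Matrix (Fin I) (Fin I) ℝ) (R : Fin 2 → Matrix (Fin I) (Fin I) ℝ),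
      Qaᵀ * Qa = 1 ∧ Qbᵀ * Qb = 1 ∧
      (∀ k, (R k).BlockTriangular id) ∧ (∀ k, Y k = Qa * R k * Qbᵀ) := by
  have h' : ∀ t : ℝ, (Y 0 + t • Y 1).det = 0 := by
    intro t
    have := h 1 t
    rwa [one_smul] at this
  exact gsd_aux I Y h'
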